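/- Let E be a σ-Dedekind complete vector lattice, F a partially ordered vector space that is monotone complete and has the countable sup property, and T : E → F a strictly positive σ-order continuous linear operator. Then E is Dedekind complete and has the countable sup property, and T is order continuous. -/

import Mathlib

open Set

lemma myIsGLB_sub_of_isLUB {α : Type} [AddCommGroup α] [PartialOrder α]
    [CovariantClass α α (· + ·) (· ≤ ·)] {e : ℕ → α} {y : α}
    (h : IsLUB (Set.range e) y) : IsGLB (Set.range fun n => y - e n) 0 := by
  constructor
  · rintro _ ⟨n, rfl⟩
    exact sub_nonneg.mpr (h.1 ⟨n, rfl⟩)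
  · intro c hc
    have h1 : ∀ n, e n ≤ y - c := fun n => le_sub_comm.mp (hc ⟨n, rfl⟩)
    have h2 : y ≤ y - c := h.2 (by rintro _ ⟨n, rfl⟩; exact h1 n)
    have := sub_nonneg.mpr h2
    simpa using this

lemma myIsLUB_of_isGLB_sub {α : Type} [AddCommGroup α] [PartialOrder α]
    [CovariantClass α α (· + ·) (· ≤ ·)] {f : ℕ → α} {c : α}
    (h : IsGLB (Set.range fun n => c - f n) 0) : IsLUB (Set.range f) c := by
  constructor
  · rintro _ ⟨n, rfl⟩
    exact sub_nonneg.mp (h.1 ⟨n, rfl⟩)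
  · intro u hu
    have h1 : ∀ n, c - u ≤ c - f n := fun n => sub_le_sub_left (hu ⟨n, rfl⟩) c
    have h2 : c - u ≤ 0 := h.2 (by rintro _ ⟨n, rfl⟩; exact h1 n)
    simpa [sub_nonpos] using h2

lemma myCore {E F : Type}
    [Lattice E] [AddCommGroup E] [CovariantClass E E (· + ·) (· ≤ ·)]
    [Module ℝ E]
    [AddCommGroup F] [PartialOrder F] [IsOrderedAddMonoid F] [Module ℝ F]
    (hσE : ∀ S : Set E, S.Nonempty → S.Countable → BddAbove S → ∃ s, IsLUB S s)
    (hmcF : ∀ S : Set F, S.Nonempty → DirectedOn (· ≤ ·) S → BddAbove S → ∃ s, IsLUB S s)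
    (hcspF : ∀ (ι : Type) [Preorder ι] [Nonempty ι], (∀ a b : ι, ∃ c, a ≤ c ∧ b ≤ c) →
      ∀ x : ι → F, (∀ i, 0 ≤ x i) → Monotone x → ∀ s : F, IsLUB (Set.range x) s →
        ∃ l : ℕ → ι, IsLUB (Set.range fun n => x (l n)) s)
    (T : E →ₗ[ℝ] F)
    (hTpos : ∀ x : E, 0 ≤ x → 0 ≤ T x)
    (hTstrict : ∀ x : E, 0 ≤ x → T x = 0 → x = 0)
    (hTσ : ∀ x : ℕ → E, Antitone x → IsGLB (Set.range x) 0 →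
      IsGLB (Set.range fun n => T (x n)) 0)
    (D : Set E) (hD : D.Nonempty) (hdir : DirectedOn (· ≤ ·) D) (hbdd : BddAbove D) :
    ∃ y, IsLUB D y ∧ ∃ e : ℕ → E, (∀ n, e n ∈ D) ∧ Monotone e ∧ IsLUB (Set.range e) y := by
  obtain ⟨b, hb⟩ := hbdd
  obtain ⟨d0, hd0⟩ := hD
  have hTmono : ∀ {u v : E}, u ≤ v → T u ≤ T v := by
    intro u v huv
    have := hTpos (v - u) (sub_nonneg.mpr huv)
    rw [map_sub] at this
    exact sub_nonneg.mp this
  -- the image T '' D has a supremum sF in F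
  have hTDne : (T '' D).Nonempty := ⟨T d0, ⟨d0, hd0, rfl⟩⟩
  have hTDdir : DirectedOn (· ≤ ·) (T '' D) := by
    rintro _ ⟨u, hu, rfl⟩ _ ⟨v, hv, rfl⟩
    obtain ⟨c, hc, hic, hjc⟩ := hdir u hu v hv
    exact ⟨T c, ⟨c, hc, rfl⟩, hTmono hic, hTmono hjc⟩
  have hTDbdd : BddAbove (T '' D) := ⟨T b, by rintro _ ⟨u, hu, rfl⟩; exact hTmono (hb hu)⟩
  obtain ⟨sF, hsF⟩ := hmcF (T '' D) hTDne hTDdir hTDbdd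
  -- the cofinal index type ι'
  let ι' : Type := {d : E // d ∈ D ∧ d0 ≤ d}
  haveI : Nonempty ι' := ⟨⟨d0, hd0, le_refl _⟩⟩
  have hdir' : ∀ a b : ι', ∃ c, a ≤ c ∧ b ≤ c := by
    rintro ⟨u, hu, hu0⟩ ⟨v, hv, hv0⟩
    obtain ⟨c, hc, hic, hjc⟩ := hdir u hu v hv
    exact ⟨⟨c, hc, le_trans hu0 hic⟩, hic, hjc⟩
  -- the shifted net on ι'
  set x' : ι' → F := fun d => T d.1 - T d0 with hx'
  have hx'pos : ∀ i, 0 ≤ x' i := fun i => sub_nonneg.mpr (hTmono i.2.2)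
  have hx'mono : Monotone x' := fun i j hij => sub_le_sub_right (hTmono hij) _
  have hx'lub : IsLUB (Set.range x') (sF - T d0) := by
    constructor
    · rintro _ ⟨i, rfl⟩
      exact sub_le_sub_right (hsF.1 ⟨i.1, i.2.1, rfl⟩) _
    · intro u hu
      have h1 : ∀ i : ι', T i.1 ≤ u + T d0 := by
        intro i
        have := hu ⟨i, rfl⟩
        have := sub_le_iff_le_add.mp this
        exact this
      have h2 : sF ≤ u + T d0 := by
        apply hsF.2
        rintro _ ⟨d, hd, rfl⟩
        obtain ⟨c, hc, hdc, hd0c⟩ := hdir d hd d0 hd0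
        exact le_trans (hTmono hdc) (h1 ⟨c, hc, hd0c⟩)
      exact sub_le_iff_le_add.mpr h2
  obtain ⟨l, hl⟩ := hcspF ι' hdir' x' hx'pos hx'mono (sF - T d0) hx'lub
  -- make a monotone dominating sequence
  choose u hu1 hu2 using hdir'
  let m : ℕ → ι' := fun n => Nat.rec (l 0) (fun k mk => u mk (l (k + 1))) n
  have hmsucc : ∀ n, m n ≤ m (n + 1) := fun n => hu1 _ _
  have hml : ∀ n, l n ≤ m n := by
    rintro (_ | n)
    · exact le_refl _
    · exact hu2 _ _
  have hmmono : Monotone m := monotone_nat_of_le_succ hmsucc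
  set e : ℕ → E := fun n => (m n).1 with he
  have hemem : ∀ n, e n ∈ D := fun n => (m n).2.1
  have hemono : Monotone e := fun i j hij => hmmono hij
  obtain ⟨y, hy⟩ := hσE (Set.range e) (range_nonempty e) (countable_range e) ⟨b, by
    rintro _ ⟨n, rfl⟩; exact hb (hemem n)⟩
  -- T y = sF
  have hglb1 : IsGLB (Set.range fun n => y - e n) 0 := myIsGLB_sub_of_isLUB hy
  have hanti1 : Antitone fun n => y - e n := fun i j hij => sub_le_sub_left (hemono hij) y
  have hTglb1 := hTσ _ hanti1 hglb1
  have hTglb1' : IsGLB (Set.range fun n => T y - T (e n)) 0 := by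
    simpa [map_sub] using hTglb1
  have hTylub : IsLUB (Set.range fun n => T (e n)) (T y) := myIsLUB_of_isGLB_sub hTglb1'
  have hTesF : IsLUB (Set.range fun n => T (e n)) sF := by
    constructor
    · rintro _ ⟨n, rfl⟩
      exact hsF.1 ⟨e n, hemem n, rfl⟩
    · intro v hv
      have h1 : ∀ n, x' (l n) ≤ v - T d0 := by
        intro n
        have hle : T (l n).1 ≤ T (e n) := hTmono (hml n)
        have : T (e n) ≤ v := hv ⟨n, rfl⟩
        exact sub_le_sub_right (le_trans hle this) _
      have h2 : sF - T d0 ≤ v - T d0 := hl.2 (by rintro _ ⟨n, rfl⟩; exact h1 n)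
      exact (sub_le_sub_iff_right (T d0)).mp h2
  have hTy : T y = sF := hTylub.unique hTesF
  -- y is an upper bound of D
  have hub : ∀ d ∈ D, d ≤ y := by
    intro d hd
    set w : ℕ → E := fun n => d ⊔ e n with hw
    have hwmono : Monotone w := fun i j hij => sup_le_sup_left (hemono hij) d
    have hwlub : IsLUB (Set.range w) (d ⊔ y) := by
      constructor
      · rintro _ ⟨n, rfl⟩
        exact sup_le_sup_left (hy.1 ⟨n, rfl⟩) d
      · intro v hv
        have h1 : ∀ n, e n ≤ v := fun n => le_trans le_sup_right (hv ⟨n, rfl⟩)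
        have h2 : y ≤ v := hy.2 (by rintro _ ⟨n, rfl⟩; exact h1 n)
        have h3 : d ≤ v := le_trans le_sup_left (hv ⟨0, rfl⟩)
        exact sup_le h3 h2
    have hglb2 : IsGLB (Set.range fun n => (d ⊔ y) - w n) 0 := myIsGLB_sub_of_isLUB hwlub
    have hanti2 : Antitone fun n => (d ⊔ y) - w n := fun i j hij =>
      sub_le_sub_left (hwmono hij) _
    have hTglb2 := hTσ _ hanti2 hglb2
    have hTglb2' : IsGLB (Set.range fun n => T (d ⊔ y) - T (w n)) 0 := by
      simpa [map_sub] using hTglb2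
    have hTwlub : IsLUB (Set.range fun n => T (w n)) (T (d ⊔ y)) :=
      myIsLUB_of_isGLB_sub hTglb2'
    have hTwle : ∀ n, T (w n) ≤ sF := by
      intro n
      obtain ⟨c, hc, hdc, hec⟩ := hdir d hd (e n) (hemem n)
      exact le_trans (hTmono (sup_le hdc hec)) (hsF.1 ⟨c, hc, rfl⟩)
    have h4 : T (d ⊔ y) ≤ sF := hTwlub.2 (by rintro _ ⟨n, rfl⟩; exact hTwle n)
    have h5 : T y ≤ T (d ⊔ y) := hTmono le_sup_right
    have h6 : T (d ⊔ y) = T y := le_antisymm (hTy ▸ h4) h5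
    have h7 : T (d ⊔ y - y) = 0 := by rw [map_sub, h6, sub_self]
    have h8 : d ⊔ y - y = 0 := hTstrict _ (sub_nonneg.mpr le_sup_right) h7
    have h9 : d ⊔ y = y := by
      have := sub_eq_zero.mp h8
      exact this
    exact le_trans le_sup_left h9.le
  refine ⟨y, ⟨fun d hd => hub d hd, ?_⟩, e, hemem, hemono, hy⟩
  intro v hv
  exact hy.2 (by rintro _ ⟨n, rfl⟩; exact hv (hemem n))


/-- Let `E` be a σ-Dedekind complete vector lattice, `F` a monotone complete
partially ordered vector space with the countable sup property, and
`T : E → F` a strictly positive σ-order continuous linear operator.  Then `E`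
is Dedekind complete and has the countable sup property, and `T` is order
continuous. -/
theorem dedekind_complete_of_strictly_positive_sigma_order_continuous
    {E F : Type}
    [Lattice E] [AddCommGroup E] [CovariantClass E E (· + ·) (· ≤ ·)]
    [Module ℝ E]
    [AddCommGroup F] [PartialOrder F] [IsOrderedAddMonoid F] [Module ℝ F]
    [PosSMulStrictMono ℝ F] [PosSMulReflectLT ℝ F]
    (hsmulE : ∀ (r : ℝ) (x y : E), 0 ≤ r → x ≤ y → r • x ≤ r • y)
    (hσE : ∀ S : Set E, S.Nonempty → S.Countable → BddAbove S → ∃ s, IsLUB S s)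
    (hmcF : ∀ S : Set F, S.Nonempty → DirectedOn (· ≤ ·) S → BddAbove S → ∃ s, IsLUB S s)
    (hcspF : ∀ (ι : Type) [Preorder ι] [Nonempty ι], (∀ a b : ι, ∃ c, a ≤ c ∧ b ≤ c) →
      ∀ x : ι → F, (∀ i, 0 ≤ x i) → Monotone x → ∀ s : F, IsLUB (Set.range x) s →
        ∃ l : ℕ → ι, IsLUB (Set.range fun n => x (l n)) s)
    (T : E →ₗ[ℝ] F)
    (hTpos : ∀ x : E, 0 ≤ x → 0 ≤ T x)
    (hTstrict : ∀ x : E, 0 ≤ x → T x = 0 → x = 0)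
    (hTσ : ∀ x : ℕ → E, Antitone x → IsGLB (Set.range x) 0 →
      IsGLB (Set.range fun n => T (x n)) 0) :
    (∀ S : Set E, S.Nonempty → BddAbove S → ∃ s, IsLUB S s) ∧
    (∀ (ι : Type) [Preorder ι] [Nonempty ι], (∀ a b : ι, ∃ c, a ≤ c ∧ b ≤ c) →
      ∀ x : ι → E, (∀ i, 0 ≤ x i) → Monotone x → ∀ s : E, IsLUB (Set.range x) s →
        ∃ l : ℕ → ι, IsLUB (Set.range fun n => x (l n)) s) ∧
    (∀ (ι : Type) [Preorder ι] [Nonempty ι], (∀ a b : ι, ∃ c, a ≤ c ∧ b ≤ c) →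
      ∀ x : ι → E, (∀ i j : ι, i ≤ j → x j ≤ x i) → IsGLB (Set.range x) 0 →
        IsGLB (Set.range fun i => T (x i)) 0) := by
  have core := myCore hσE hmcF hcspF T hTpos hTstrict hTσ
  refine ⟨?_, ?_, ?_⟩
  · -- Dedekind completeness
    intro S hS hSbdd
    classical
    obtain ⟨a, ha⟩ := hS
    set D : Set E := {z | ∃ t : Finset E, ∃ ht : t.Nonempty, ↑t ⊆ S ∧ t.sup' ht id = z}
      with hDdef
    have hDne : D.Nonempty := ⟨a, {a}, Finset.singleton_nonempty a, by simpa using ha, by simp⟩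
    have hDdir : DirectedOn (· ≤ ·) D := by
      rintro _ ⟨t₁, ht₁, hts₁, rfl⟩ _ ⟨t₂, ht₂, hts₂, rfl⟩
      refine ⟨(t₁ ∪ t₂).sup' ht₁.inl id,
        ⟨t₁ ∪ t₂, ht₁.inl, ?_, rfl⟩, ?_, ?_⟩
      · intro z hz
        rcases Finset.mem_union.mp hz with h | h
        · exact hts₁ h
        · exact hts₂ h
      · exact Finset.sup'_le _ _ fun c hc => Finset.le_sup' id (Finset.mem_union_left _ hc)
      · exact Finset.sup'_le _ _ fun c hc => Finset.le_sup' id (Finset.mem_union_right _ hc)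
    have hubeq : upperBounds D = upperBounds S := by
      ext v
      constructor
      · intro hv z hz
        exact hv ⟨{z}, Finset.singleton_nonempty z, by simpa using hz, by simp⟩
      · intro hv z hz
        obtain ⟨t, ht, hts, rfl⟩ := hz
        exact Finset.sup'_le _ _ fun c hc => hv (hts hc)
    have hDbdd : BddAbove D := by
      obtain ⟨u, hu⟩ := hSbdd
      exact ⟨u, hubeq ▸ hu⟩
    obtain ⟨y, hy, -⟩ := core D hDne hDdir hDbdd
    exact ⟨y, hubeq ▸ hy.1, fun v hv => hy.2 (hubeq ▸ hv)⟩
  · -- countable sup property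
    intro ι _ _ hdir x hxpos hxmono s hs
    have hDne : (Set.range x).Nonempty := Set.range_nonempty x
    have hDdir : DirectedOn (· ≤ ·) (Set.range x) := by
      rintro _ ⟨i, rfl⟩ _ ⟨j, rfl⟩
      obtain ⟨c, hic, hjc⟩ := hdir i j
      exact ⟨x c, ⟨c, rfl⟩, hxmono hic, hxmono hjc⟩
    obtain ⟨y, hy, e, hemem, -, helub⟩ := core (Set.range x) hDne hDdir ⟨s, hs.1⟩
    have hys : y = s := hy.unique hs
    subst hys
    choose l hl using hemem
    refine ⟨l, ?_⟩
    have : (fun n => x (l n)) = e := funext fun n => hl n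
    rw [this]
    exact helub
  · -- order continuity of T
    intro ι _ _ hdir x hxanti hxglb
    obtain ⟨i0⟩ := (inferInstance : Nonempty ι)
    have hx0 : ∀ i, 0 ≤ x i := fun i => hxglb.1 ⟨i, rfl⟩
    set D : Set E := {z | ∃ i, i0 ≤ i ∧ z = x i0 - x i} with hDdef
    have hDne : D.Nonempty := ⟨x i0 - x i0, i0, le_refl _, rfl⟩
    have hDdir : DirectedOn (· ≤ ·) D := by
      rintro _ ⟨i, hi, rfl⟩ _ ⟨j, hj, rfl⟩
      obtain ⟨c, hic, hjc⟩ := hdir i j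
      exact ⟨x i0 - x c, ⟨c, le_trans hi hic, rfl⟩,
        sub_le_sub_left (hxanti _ _ hic) _, sub_le_sub_left (hxanti _ _ hjc) _⟩
    have hDbdd : BddAbove D := ⟨x i0, by
      rintro _ ⟨i, hi, rfl⟩
      exact sub_le_self _ (hx0 i)⟩
    obtain ⟨y, hy, e, hemem, hemono, helub⟩ := core D hDne hDdir hDbdd
    have hylub : IsLUB D (x i0) := by
      constructor
      · rintro _ ⟨i, hi, rfl⟩
        exact sub_le_self _ (hx0 i)
      · intro v hv
        have h1 : ∀ i, i0 ≤ i → x i0 - v ≤ x i := by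
          intro i hi
          exact sub_le_comm.mp (hv ⟨i, hi, rfl⟩)
        have h2 : x i0 - v ∈ lowerBounds (Set.range x) := by
          rintro _ ⟨j, rfl⟩
          obtain ⟨k, hjk, hik⟩ := hdir j i0
          exact le_trans (h1 k hik) (hxanti _ _ hjk)
        have h3 : x i0 - v ≤ 0 := hxglb.2 h2
        exact sub_nonpos.mp h3
    have hyx : y = x i0 := hy.unique hylub
    -- e n = x i0 - x (i_n)
    choose idx hidx hval using hemem
    set g : ℕ → E := fun n => x (idx n) with hg
    have helub' : IsLUB (Set.range e) (x i0) := hyx ▸ helub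
    have hgval : ∀ n, g n = x i0 - e n := fun n => by
      simp only [hg]
      rw [hval n]
      abel
    have hgglb : IsGLB (Set.range g) 0 := by
      have := myIsGLB_sub_of_isLUB helub'
      have heq : (fun n => x i0 - e n) = g := funext fun n => (hgval n).symm
      rwa [heq] at this
    have hganti : Antitone g := by
      intro i j hij
      rw [hgval i, hgval j]
      exact sub_le_sub_left (hemono hij) _
    have hTg := hTσ g hganti hgglb
    constructor
    · rintro _ ⟨i, rfl⟩
      exact hTpos _ (hx0 i)
    · intro c hc
      refine hTg.2 ?_
      rintro _ ⟨n, rfl⟩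
      exact hc ⟨idx n, rfl⟩
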